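/- Let k be a commutative ring with identity and (R,b) a k-algebra with a bilinear form such that the multiplication of A := (R,b)@k is associative (so A is an associative unital k-algebra). Let f : T(R) → A be the unique unital k-algebra homomorphism from the tensor algebra T(R) of the underlying k-module of R to A satisfying f(ι(r)) = (r,0) for all r ∈ R, where ι : R → T(R) is the canonical inclusion. Then f is surjective and its kernel equals the two-sided ideal of T(R) generated by the set of elements b(x,y)·1 − ι(xy) + ι(x)ι(y), for x,y ∈ R. Consequently T(R)/I ≅ (R,b)@k as unital k-algebras. -/

import Mathlib

/-- For a `k`-algebra `R` (multiplication `μ`) with a bilinear form `b`, the multiplication of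
the extension `(R,b)@k` on `R ⊕ k`: `(r,c)(r',c') = (rr' + c • r' + c' • r, cc' - b r r')`. -/
def atMul {k R : Type*} [CommRing k] [AddCommGroup R] [Module k R]
    (μ : R →ₗ[k] R →ₗ[k] R) (b : R →ₗ[k] R →ₗ[k] k) (p q : R × k) : R × k :=
  (μ p.1 q.1 + p.2 • q.1 + q.2 • p.1, p.2 * q.2 - b p.1 q.1)

/-- Suppose the multiplication of `A := (R,b)@k` is associative, and let
`f : T(R) → A` be the (unique) unital `k`-algebra homomorphism from the tensor algebra of the
`k`-module `R` to `A` with `f (ι r) = (r, 0)` for all `r`. Then `f` is surjective and its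
kernel is the two-sided ideal of `T(R)` generated by the elements
`b x y • 1 - ι (μ x y) + ι x * ι y` for `x, y ∈ R`; consequently `T(R)/I ≅ (R,b)@k`. -/
theorem stmt11 (k R : Type*) [CommRing k] [AddCommGroup R] [Module k R]
    (μ : R →ₗ[k] R →ₗ[k] R) (b : R →ₗ[k] R →ₗ[k] k)
    (hassoc : ∀ p q r : R × k, atMul μ b (atMul μ b p q) r = atMul μ b p (atMul μ b q r))
    (f : TensorAlgebra k R →ₗ[k] R × k)
    (hf1 : f 1 = ((0 : R), (1 : k)))
    (hfmul : ∀ x y : TensorAlgebra k R, f (x * y) = atMul μ b (f x) (f y))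
    (hfι : ∀ r : R, f (TensorAlgebra.ι k r) = (r, (0 : k))) :
    Function.Surjective f ∧
    ∀ x : TensorAlgebra k R, f x = 0 ↔
      x ∈ TwoSidedIdeal.span
        {t : TensorAlgebra k R | ∃ r r' : R,
          t = algebraMap k (TensorAlgebra k R) (b r r')
              - TensorAlgebra.ι k (μ r r') + TensorAlgebra.ι k r * TensorAlgebra.ι k r'} := by
  set ι := TensorAlgebra.ι k (M := R)
  set S : Set (TensorAlgebra k R) :=
    {t | ∃ r r' : R, t = algebraMap k (TensorAlgebra k R) (b r r') - ι (μ r r') + ι r * ι r'}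
  set I := TwoSidedIdeal.span S with hI
  have halg : ∀ c : k, f (algebraMap k (TensorAlgebra k R) c) = (0, c) := by
    intro c
    rw [Algebra.algebraMap_eq_smul_one, map_smul, hf1]
    simp [Prod.smul_def]
  constructor
  · intro p
    refine ⟨ι p.1 + algebraMap k (TensorAlgebra k R) p.2, ?_⟩
    rw [map_add, hfι, halg]
    ext <;> simp
  · -- key lemma: every x is congruent mod I to ι (f x).1 + algebraMap (f x).2
    have key : ∀ x : TensorAlgebra k R,
        x - (ι (f x).1 + algebraMap k (TensorAlgebra k R) (f x).2) ∈ I := by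
      intro x
      induction x using TensorAlgebra.induction with
      | algebraMap c =>
          rw [halg]
          simpa using I.zero_mem
      | ι r =>
          rw [hfι]
          simpa [ι] using I.zero_mem
      | mul x y hx hy =>
          set u := ι (f x).1 + algebraMap k (TensorAlgebra k R) (f x).2 with hu
          set v := ι (f y).1 + algebraMap k (TensorAlgebra k R) (f y).2 with hv
          have h1 : (x - u) * y ∈ I := I.mul_mem_right _ _ hx
          have h2 : u * (y - v) ∈ I := I.mul_mem_left _ _ hy
          have hgen : algebraMap k (TensorAlgebra k R) (b (f x).1 (f y).1)
              - ι (μ (f x).1 (f y).1) + ι (f x).1 * ι (f y).1 ∈ I :=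
            TwoSidedIdeal.subset_span ⟨(f x).1, (f y).1, rfl⟩
          have hsum := I.add_mem (I.add_mem h1 h2) hgen
          have heq : (x - u) * y + u * (y - v) +
              (algebraMap k (TensorAlgebra k R) (b (f x).1 (f y).1)
                - ι (μ (f x).1 (f y).1) + ι (f x).1 * ι (f y).1)
              = x * y - (ι (f (x * y)).1
                + algebraMap k (TensorAlgebra k R) (f (x * y)).2) := by
            rw [hfmul x y]
            simp only [atMul, hu, hv]
            simp only [map_add, map_sub, map_mul, sub_mul, mul_sub, add_mul, mul_add,
              Algebra.algebraMap_eq_smul_one, smul_mul_assoc, mul_smul_comm, one_mul, mul_one,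
              map_smul, smul_sub, smul_smul]
            module
          rw [← heq]
          exact hsum
      | add x y hx hy =>
          have := I.add_mem hx hy
          have heq : x - (ι (f x).1 + algebraMap k (TensorAlgebra k R) (f x).2)
              + (y - (ι (f y).1 + algebraMap k (TensorAlgebra k R) (f y).2))
              = x + y - (ι (f (x + y)).1 + algebraMap k (TensorAlgebra k R) (f (x + y)).2) := by
            rw [map_add]
            simp only [Prod.fst_add, Prod.snd_add, map_add]
            abel
          rwa [heq] at this
    intro x
    constructor
    · intro hx
      have := key x
      rw [hx] at this
      simpa using this
    · -- the kernel of f is a two-sided ideal containing S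
      intro hx
      have hK' : ∀ y ∈ I, f y = 0 := by
        intro y hy
        rw [hI, TwoSidedIdeal.mem_span_iff] at hy
        set K := TwoSidedIdeal.mk' {z | f z = 0} (by simp : f 0 = 0)
          (fun {a b'} ha hb => by simp only [Set.mem_setOf_eq] at *; rw [map_add, ha, hb, add_zero])
          (fun {a} ha => by simp only [Set.mem_setOf_eq] at *; rw [map_neg, ha, neg_zero])
          (fun {a b'} hb => by
            simp only [Set.mem_setOf_eq] at *
            rw [hfmul, hb]; simp [atMul])
          (fun {a b'} ha => by
            simp only [Set.mem_setOf_eq] at *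
            rw [hfmul, ha]; simp [atMul]) with hK
        have hmem : y ∈ K := by
          refine hy K ?_
          intro t ht
          obtain ⟨r, r', rfl⟩ := ht
          rw [SetLike.mem_coe, hK, TwoSidedIdeal.mem_mk']
          show f _ = 0
          rw [map_add, map_sub, halg, hfι, hfmul, hfι, hfι]
          ext <;> simp [atMul]
        rw [hK, TwoSidedIdeal.mem_mk'] at hmem
        exact hmem
      exact hK' x hx
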